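/- Let (λ_i)_{i≥1} be a strictly decreasing positive sequence with λ_i → 0 and (a_i)_{i≥1} a positive summable sequence, and let k > 0. Define J(s) = ∑_{i=1}^∞ a_i/(s + λ_i) for real s not equal to any -λ_i. Then the equation 1 + k J(s) = 0 has exactly one solution s = -ν_j in each interval (-λ_{j-1}, -λ_j) for j > 1 and exactly one solution s = -ν_1 in (-∞, -λ_1); in particular λ_1 < ν_1 and λ_j < ν_j < λ_{j-1} for j > 1. -/

import Mathlib

open Filter

section Aux

variable {lam a : ℕ → ℝ}

/-- strict monotonicity of a single term when both denominators have the same sign -/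
lemma div_lt_div_same_sign {c s t : ℝ} (hc : 0 < c) (hst : s < t)
    (h : (0 < s ∧ 0 < t) ∨ (s < 0 ∧ t < 0)) : c / t < c / s := by
  rcases h with ⟨hs, _⟩ | ⟨_, ht⟩
  · exact div_lt_div_of_pos_left hc hs hst
  · have h2 := div_lt_div_of_pos_left hc (neg_pos.2 ht) (neg_lt_neg hst)
    rw [div_neg, div_neg, neg_lt_neg_iff] at h2
    exact h2

lemma aux_summable (hapos : ∀ i, 0 < a i) (hasum : Summable a)
    {s δ : ℝ} (hδ : 0 < δ) (h : ∀ i, δ ≤ |s + lam i|) :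
    Summable (fun i => a i / (s + lam i)) := by
  apply Summable.of_norm_bounded (hasum.div_const δ)
  intro i
  rw [norm_div, Real.norm_eq_abs, Real.norm_eq_abs, abs_of_pos (hapos i)]
  gcongr
  · exact (hapos i).le
  · exact h i

lemma abs_bound_Ioo (hanti : StrictAnti lam) {j : ℕ} {s : ℝ}
    (h1 : 0 < s + lam j) (h2 : s + lam (j+1) < 0) (i : ℕ) :
    min (s + lam j) (-(s + lam (j+1))) ≤ |s + lam i| := by
  rcases le_or_gt i j with hij | hij
  · have hle : s + lam j ≤ s + lam i := by
      have := hanti.antitone hij; linarith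
    rw [abs_of_pos (lt_of_lt_of_le h1 hle)]
    exact le_trans (min_le_left _ _) hle
  · have hle : s + lam i ≤ s + lam (j+1) := by
      have := hanti.antitone (Nat.succ_le_of_lt hij); linarith
    rw [abs_of_neg (lt_of_le_of_lt hle h2)]
    exact le_trans (min_le_right _ _) (by linarith)

lemma abs_bound_Iio (hanti : StrictAnti lam) {s : ℝ}
    (h : s + lam 0 < 0) (i : ℕ) : -(s + lam 0) ≤ |s + lam i| := by
  have hle : s + lam i ≤ s + lam 0 := by
    have := hanti.antitone (Nat.zero_le i); linarith
  rw [abs_of_neg (lt_of_le_of_lt hle h)]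
  linarith

/-- lower bound for J with a distinguished index -/
lemma J_lower (hapos : ∀ i, 0 < a i) (hasum : Summable a) {s c : ℝ} (hc : 0 < c)
    (j : ℕ) (hsum : Summable (fun i => a i / (s + lam i)))
    (h : ∀ i, i ≠ j → -(a i / c) ≤ a i / (s + lam i)) :
    a j / (s + lam j) - (∑' i, a i) / c ≤ ∑' i, a i / (s + lam i) := by
  have hsingle : Summable (fun i => if i = j then a j / (s + lam j) else 0) :=
    (hasSum_ite_eq j _).summable
  have hsub : Summable (fun i => (if i = j then a j / (s + lam j) else 0) - a i / c) :=
    hsingle.sub (hasum.div_const c)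
  have key : ∑' i, ((if i = j then a j / (s + lam j) else 0) - a i / c)
      ≤ ∑' i, a i / (s + lam i) := by
    apply Summable.tsum_le_tsum _ hsub hsum
    intro i
    by_cases hij : i = j
    · subst hij
      rw [if_pos rfl]
      have : 0 ≤ a i / c := le_of_lt (div_pos (hapos i) hc)
      linarith
    · simp only [if_neg hij]
      have := h i hij
      linarith
  rw [Summable.tsum_sub hsingle (hasum.div_const c), tsum_ite_eq, tsum_div_const] at key
  exact key

/-- upper bound for J with a distinguished index -/
lemma J_upper (hapos : ∀ i, 0 < a i) (hasum : Summable a) {s c : ℝ} (hc : 0 < c)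
    (j : ℕ) (hsum : Summable (fun i => a i / (s + lam i)))
    (h : ∀ i, i ≠ j → a i / (s + lam i) ≤ a i / c) :
    ∑' i, a i / (s + lam i) ≤ a j / (s + lam j) + (∑' i, a i) / c := by
  have hsingle : Summable (fun i => if i = j then a j / (s + lam j) else 0) :=
    (hasSum_ite_eq j _).summable
  have hadd : Summable (fun i => (if i = j then a j / (s + lam j) else 0) + a i / c) :=
    hsingle.add (hasum.div_const c)
  have key : ∑' i, a i / (s + lam i)
      ≤ ∑' i, ((if i = j then a j / (s + lam j) else 0) + a i / c) := by
    apply Summable.tsum_le_tsum _ hsum hadd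
    intro i
    by_cases hij : i = j
    · subst hij
      rw [if_pos rfl]
      have : 0 ≤ a i / c := le_of_lt (div_pos (hapos i) hc)
      linarith
    · simp only [if_neg hij]
      have := h i hij
      linarith
  rw [Summable.tsum_add hsingle (hasum.div_const c), tsum_ite_eq, tsum_div_const] at key
  exact key

/-- simple lower bound for J : all terms at least -(a i)/c -/
lemma J_lower_all (hasum : Summable a) {s c : ℝ}
    (hsum : Summable (fun i => a i / (s + lam i)))
    (h : ∀ i, -(a i / c) ≤ a i / (s + lam i)) :
    -((∑' i, a i) / c) ≤ ∑' i, a i / (s + lam i) := by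
  have key := Summable.tsum_le_tsum h ((hasum.div_const c).neg) hsum
  rwa [tsum_neg, tsum_div_const] at key

end Aux

lemma key_Ioo (lam : ℕ → ℝ) (hanti : StrictAnti lam)
    (a : ℕ → ℝ) (hapos : ∀ i, 0 < a i) (hasum : Summable a)
    (k : ℝ) (hk : 0 < k) (j : ℕ) :
    ∃! s : ℝ, s ∈ Set.Ioo (-(lam j)) (-(lam (j + 1))) ∧
      1 + k * (∑' i, a i / (s + lam i)) = 0 := by
  set T := ∑' i, a i with hTdef
  have hT : 0 < T := Summable.tsum_pos hasum (fun i => (hapos i).le) 0 (hapos 0)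
  set A := -(lam j) with hA
  set B := -(lam (j+1)) with hB
  have hlamj : lam j = -A := by rw [hA]; ring
  have hlamj1 : lam (j+1) = -B := by rw [hB]; ring
  have hAB : A < B := by
    have := hanti (Nat.lt_succ_self j)
    rw [hA, hB]; linarith
  set d := (B - A) / 2 with hd
  have hdpos : 0 < d := by rw [hd]; linarith
  have hB2 : B = A + 2 * d := by rw [hd]; ring
  -- sign facts
  have hsign : ∀ u ∈ Set.Ioo A B, ∀ i, (i ≤ j → 0 < u + lam i) ∧ (j + 1 ≤ i → u + lam i < 0) := by
    intro u hu i
    have h1 : A < u := hu.1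
    have h2 : u < B := hu.2
    constructor
    · intro hij
      have h3 := hanti.antitone hij
      linarith
    · intro hij
      have h3 := hanti.antitone hij
      linarith
  -- summability at points of the interval
  have hsum_of : ∀ u ∈ Set.Ioo A B, Summable (fun i => a i / (u + lam i)) := by
    intro u hu
    have h1 : 0 < u + lam j := (hsign u hu j).1 le_rfl
    have h2 : u + lam (j+1) < 0 := (hsign u hu (j+1)).2 le_rfl
    exact aux_summable hapos hasum (lt_min h1 (by linarith)) (abs_bound_Ioo hanti h1 h2)
  -- strict antitonicity of J on the interval
  have hmono : ∀ u ∈ Set.Ioo A B, ∀ v ∈ Set.Ioo A B, u < v →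
      (∑' i, a i / (v + lam i)) < ∑' i, a i / (u + lam i) := by
    intro u hu v hv huv
    have hsgn : ∀ i, (0 < u + lam i ∧ 0 < v + lam i) ∨ (u + lam i < 0 ∧ v + lam i < 0) := by
      intro i
      rcases le_or_gt i j with hij | hij
      · exact Or.inl ⟨(hsign u hu i).1 hij, (hsign v hv i).1 hij⟩
      · exact Or.inr ⟨(hsign u hu i).2 hij, (hsign v hv i).2 hij⟩
    have hle : ∀ i, a i / (v + lam i) ≤ a i / (u + lam i) := fun i =>
      le_of_lt (div_lt_div_same_sign (hapos i) (by linarith) (hsgn i))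
    exact Summable.tsum_lt_tsum (i := 0) hle
      (div_lt_div_same_sign (hapos 0) (by linarith) (hsgn 0))
      (hsum_of v hv) (hsum_of u hu)
  -- uniqueness
  have huniq : ∀ u ∈ Set.Ioo A B, ∀ v ∈ Set.Ioo A B,
      1 + k * (∑' i, a i / (u + lam i)) = 0 → 1 + k * (∑' i, a i / (v + lam i)) = 0 → u = v := by
    intro u hu v hv h1 h2
    by_contra hne
    have hJ : (∑' i, a i / (u + lam i)) = ∑' i, a i / (v + lam i) :=
      mul_left_cancel₀ hk.ne'
        (by linarith : k * (∑' i, a i / (u + lam i)) = k * (∑' i, a i / (v + lam i)))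
    rcases lt_or_gt_of_ne hne with h | h
    · exact absurd hJ (ne_of_gt (hmono u hu v hv h))
    · exact absurd hJ (ne_of_lt (hmono v hv u hu h))
  -- the left test point
  set ε := min (d / 2) (a j * d / T) with hε
  have hεpos : 0 < ε := lt_min (by linarith) (div_pos (mul_pos (hapos j) hdpos) hT)
  have hεd : ε ≤ d / 2 := min_le_left _ _
  set s₁ := A + ε with hs₁def
  have hs₁mem : s₁ ∈ Set.Ioo A B := by
    rw [Set.mem_Ioo, hs₁def]
    constructor <;> linarith
  have hs₁j : s₁ + lam j = ε := by rw [hs₁def, hlamj]; ring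
  have hs₁j1 : s₁ + lam (j+1) = ε - 2 * d := by rw [hs₁def, hlamj1, hB2]; ring
  have hfs₁ : 0 < 1 + k * (∑' i, a i / (s₁ + lam i)) := by
    have hlow : a j / (s₁ + lam j) - T / d ≤ ∑' i, a i / (s₁ + lam i) := by
      apply J_lower hapos hasum hdpos j (hsum_of s₁ hs₁mem)
      intro i hij
      rcases lt_or_gt_of_ne hij with h | h
      · have hposi : 0 < a i / (s₁ + lam i) :=
          div_pos (hapos i) ((hsign s₁ hs₁mem i).1 h.le)
        have : 0 < a i / d := div_pos (hapos i) hdpos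
        linarith
      · have h3 := hanti.antitone (Nat.succ_le_of_lt h)
        have hdle : d ≤ -(s₁ + lam i) := by linarith [hs₁j1]
        have hq : a i / (-(s₁ + lam i)) ≤ a i / d := by
          gcongr
          exact (hapos i).le
        rw [div_neg] at hq
        linarith
    have hdne : d ≠ 0 := hdpos.ne'
    have hTne : T ≠ 0 := hT.ne'
    have hajne : a j ≠ 0 := (hapos j).ne'
    have haj : T / d ≤ a j / (s₁ + lam j) := by
      rw [hs₁j]
      have h1 : a j / (a j * d / T) ≤ a j / ε := by
        gcongr
        · exact (hapos j).le
        · exact min_le_right _ _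
      have h2 : a j / (a j * d / T) = T / d := by
        field_simp
      linarith
    have hJ : 0 ≤ ∑' i, a i / (s₁ + lam i) := by linarith
    nlinarith
  -- the right test point
  set C := 1 / k + T / d + 1 with hC
  have hCpos : 0 < C := by
    have h1 : 0 < 1 / k := by positivity
    have h2 : 0 < T / d := div_pos hT hdpos
    rw [hC]; linarith
  set ε' := min (d / 2) (a (j+1) / C) with hε'
  have hε'pos : 0 < ε' := lt_min (by linarith) (div_pos (hapos (j+1)) hCpos)
  have hε'd : ε' ≤ d / 2 := min_le_left _ _
  set s₂ := B - ε' with hs₂def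
  have hs₂mem : s₂ ∈ Set.Ioo A B := by
    rw [Set.mem_Ioo, hs₂def]
    constructor <;> linarith
  have hs₂j1 : s₂ + lam (j+1) = -ε' := by rw [hs₂def, hlamj1]; ring
  have hs₂j : s₂ + lam j = 2 * d - ε' := by rw [hs₂def, hlamj, hB2]; ring
  have hfs₂ : 1 + k * (∑' i, a i / (s₂ + lam i)) < 0 := by
    have hup : (∑' i, a i / (s₂ + lam i)) ≤ a (j+1) / (s₂ + lam (j+1)) + T / d := by
      apply J_upper hapos hasum hdpos (j+1) (hsum_of s₂ hs₂mem)
      intro i hij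
      rcases lt_or_gt_of_ne hij with h | h
      · have hij' : i ≤ j := Nat.lt_succ_iff.mp h
        have h3 := hanti.antitone hij'
        have hpd : d ≤ s₂ + lam i := by linarith [hs₂j]
        gcongr
        exact (hapos i).le
      · have hneg : s₂ + lam i < 0 := (hsign s₂ hs₂mem i).2 (by omega)
        have h1 : a i / (s₂ + lam i) < 0 := div_neg_of_pos_of_neg (hapos i) hneg
        have h2 : 0 < a i / d := div_pos (hapos i) hdpos
        linarith
    have haj1ne : a (j+1) ≠ 0 := (hapos (j+1)).ne'
    have hCne : C ≠ 0 := hCpos.ne'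
    have haj : a (j+1) / (s₂ + lam (j+1)) ≤ -C := by
      rw [hs₂j1, div_neg]
      have h1 : a (j+1) / (a (j+1) / C) ≤ a (j+1) / ε' := by
        gcongr
        · exact (hapos (j+1)).le
        · exact min_le_right _ _
      have h2 : a (j+1) / (a (j+1) / C) = C := by
        field_simp
      linarith
    have hJ : (∑' i, a i / (s₂ + lam i)) ≤ -(1 / k) - 1 := by
      have : a (j+1) / (s₂ + lam (j+1)) ≤ -(1/k) - T/d - 1 := by rw [hC] at haj; linarith
      linarith
    have hk1 : k * (1 / k) = 1 := by field_simp
    nlinarith [mul_le_mul_of_nonneg_left hJ hk.le]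
  -- s₁ < s₂
  have hs₁₂ : s₁ < s₂ := by
    rw [hs₁def, hs₂def]
    linarith
  -- continuity on [s₁, s₂]
  set δ := min ε ε' with hδ
  have hδpos : 0 < δ := lt_min hεpos hε'pos
  have habs : ∀ u ∈ Set.Icc s₁ s₂, ∀ i, δ ≤ |u + lam i| := by
    intro u hu i
    have h1 : ε ≤ u + lam j := by linarith [hs₁j, hu.1]
    have h2 : u + lam (j+1) ≤ -ε' := by linarith [hs₂j1, hu.2]
    have h3 := abs_bound_Ioo hanti (lt_of_lt_of_le hεpos h1) (lt_of_le_of_lt h2 (by linarith)) i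
    have hmin : δ ≤ min (u + lam j) (-(u + lam (j+1))) :=
      le_min (le_trans (le_trans (min_le_left _ _) h1) le_rfl)
        (le_trans (min_le_right _ _) (by linarith))
    linarith
  have hcont : ContinuousOn (fun u => 1 + k * ∑' i, a i / (u + lam i)) (Set.Icc s₁ s₂) := by
    apply ContinuousOn.add continuousOn_const
    apply ContinuousOn.mul continuousOn_const
    apply continuousOn_tsum (u := fun i => a i / δ)
    · intro i
      apply ContinuousOn.div continuousOn_const
        ((continuous_id.add continuous_const).continuousOn)
      intro u hu h0
      have := habs u hu i
      simp only [Pi.add_apply, id_eq] at h0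
      rw [h0, abs_zero] at this
      linarith
    · exact hasum.div_const δ
    · intro i u hu
      rw [norm_div, Real.norm_eq_abs, Real.norm_eq_abs, abs_of_pos (hapos i)]
      gcongr
      · exact (hapos i).le
      · exact habs u hu i
  have h0mem : (0 : ℝ) ∈ Set.Ioo (1 + k * ∑' i, a i / (s₂ + lam i))
      (1 + k * ∑' i, a i / (s₁ + lam i)) := ⟨hfs₂, hfs₁⟩
  obtain ⟨c, hc, hfc⟩ := intermediate_value_Ioo' hs₁₂.le hcont h0mem
  have hcmem : c ∈ Set.Ioo A B := ⟨lt_trans hs₁mem.1 hc.1, lt_trans hc.2 hs₂mem.2⟩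
  refine ⟨c, ⟨hcmem, hfc⟩, ?_⟩
  rintro y ⟨hy, hyeq⟩
  exact huniq y hy c hcmem hyeq hfc

lemma key_Iio (lam : ℕ → ℝ) (hanti : StrictAnti lam)
    (a : ℕ → ℝ) (hapos : ∀ i, 0 < a i) (hasum : Summable a)
    (k : ℝ) (hk : 0 < k) :
    ∃! s : ℝ, s ∈ Set.Iio (-(lam 0)) ∧ 1 + k * (∑' i, a i / (s + lam i)) = 0 := by
  set T := ∑' i, a i with hTdef
  have hT : 0 < T := Summable.tsum_pos hasum (fun i => (hapos i).le) 0 (hapos 0)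
  set A := -(lam 0) with hA
  have hlam0 : lam 0 = -A := by rw [hA]; ring
  have hsign : ∀ u ∈ Set.Iio A, ∀ i, u + lam i < 0 := by
    intro u hu i
    have h1 : u < A := hu
    have h2 := hanti.antitone (Nat.zero_le i)
    linarith
  have hsum_of : ∀ u ∈ Set.Iio A, Summable (fun i => a i / (u + lam i)) := by
    intro u hu
    have h1 : u + lam 0 < 0 := hsign u hu 0
    exact aux_summable hapos hasum (by linarith : (0:ℝ) < -(u + lam 0)) (abs_bound_Iio hanti h1)
  have hmono : ∀ u ∈ Set.Iio A, ∀ v ∈ Set.Iio A, u < v →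
      (∑' i, a i / (v + lam i)) < ∑' i, a i / (u + lam i) := by
    intro u hu v hv huv
    have hsgn : ∀ i, (0 < u + lam i ∧ 0 < v + lam i) ∨ (u + lam i < 0 ∧ v + lam i < 0) :=
      fun i => Or.inr ⟨hsign u hu i, hsign v hv i⟩
    have hle : ∀ i, a i / (v + lam i) ≤ a i / (u + lam i) := fun i =>
      le_of_lt (div_lt_div_same_sign (hapos i) (by linarith) (hsgn i))
    exact Summable.tsum_lt_tsum (i := 0) hle
      (div_lt_div_same_sign (hapos 0) (by linarith) (hsgn 0))
      (hsum_of v hv) (hsum_of u hu)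
  have huniq : ∀ u ∈ Set.Iio A, ∀ v ∈ Set.Iio A,
      1 + k * (∑' i, a i / (u + lam i)) = 0 → 1 + k * (∑' i, a i / (v + lam i)) = 0 → u = v := by
    intro u hu v hv h1 h2
    by_contra hne
    have hJ : (∑' i, a i / (u + lam i)) = ∑' i, a i / (v + lam i) :=
      mul_left_cancel₀ hk.ne'
        (by linarith : k * (∑' i, a i / (u + lam i)) = k * (∑' i, a i / (v + lam i)))
    rcases lt_or_gt_of_ne hne with h | h
    · exact absurd hJ (ne_of_gt (hmono u hu v hv h))
    · exact absurd hJ (ne_of_lt (hmono v hv u hu h))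
  -- right test point
  set C := 1 / k + 1 + T with hC
  have hCpos : 0 < C := by
    have h1 : 0 < 1 / k := by positivity
    rw [hC]; linarith
  set ε' := a 0 / C with hε'
  have hε'pos : 0 < ε' := div_pos (hapos 0) hCpos
  set s₂ := A - ε' with hs₂def
  have hs₂mem : s₂ ∈ Set.Iio A := by rw [Set.mem_Iio, hs₂def]; linarith
  have hs₂0 : s₂ + lam 0 = -ε' := by rw [hs₂def, hlam0]; ring
  have hfs₂ : 1 + k * (∑' i, a i / (s₂ + lam i)) < 0 := by
    have hup : (∑' i, a i / (s₂ + lam i)) ≤ a 0 / (s₂ + lam 0) + T / 1 := by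
      apply J_upper hapos hasum one_pos 0 (hsum_of s₂ hs₂mem)
      intro i hij
      have hneg : s₂ + lam i < 0 := hsign s₂ hs₂mem i
      have h1 : a i / (s₂ + lam i) < 0 := div_neg_of_pos_of_neg (hapos i) hneg
      have h2 : 0 < a i / 1 := by rw [div_one]; exact hapos i
      linarith
    have ha0ne : a 0 ≠ 0 := (hapos 0).ne'
    have hCne : C ≠ 0 := hCpos.ne'
    have haj : a 0 / (s₂ + lam 0) = -C := by
      rw [hs₂0, div_neg, hε']
      have : a 0 / (a 0 / C) = C := by field_simp
      rw [this]
    have hJ : (∑' i, a i / (s₂ + lam i)) ≤ -(1 / k) - 1 := by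
      rw [haj, hC, div_one] at hup
      linarith
    have hk1 : k * (1 / k) = 1 := by field_simp
    nlinarith [mul_le_mul_of_nonneg_left hJ hk.le]
  -- left test point
  set R := 2 * k * T + ε' + 1 with hR
  have hRpos : 0 < R := by rw [hR]; positivity
  set s₁ := A - R with hs₁def
  have hs₁mem : s₁ ∈ Set.Iio A := by rw [Set.mem_Iio, hs₁def]; linarith
  have hs₁0 : s₁ + lam 0 = -R := by rw [hs₁def, hlam0]; ring
  have hfs₁ : 0 < 1 + k * (∑' i, a i / (s₁ + lam i)) := by
    have hlow : -(T / R) ≤ ∑' i, a i / (s₁ + lam i) := by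
      apply J_lower_all hasum (hsum_of s₁ hs₁mem)
      intro i
      have hneg : s₁ + lam i < 0 := hsign s₁ hs₁mem i
      have h2 := hanti.antitone (Nat.zero_le i)
      have hdle : R ≤ -(s₁ + lam i) := by linarith [hs₁0]
      have hq : a i / (-(s₁ + lam i)) ≤ a i / R := by
        gcongr
        exact (hapos i).le
      rw [div_neg] at hq
      linarith
    have hkT : 0 < 2 * k * T := by positivity
    have h1 : T / R ≤ T / (2 * k * T) := by
      gcongr
      rw [hR]; linarith
    have h2 : T / (2 * k * T) = 1 / (2 * k) := by
      rw [eq_div_iff (by positivity : (2:ℝ) * k ≠ 0)]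
      field_simp
    have h3 : k * (1 / (2 * k)) = 1 / 2 := by
      field_simp
    have h4 : k * (T / R) ≤ 1 / 2 := by
      calc k * (T / R) ≤ k * (1 / (2 * k)) := by
            apply mul_le_mul_of_nonneg_left _ hk.le
            rw [← h2]; exact h1
        _ = 1 / 2 := h3
    have h5 := mul_le_mul_of_nonneg_left hlow hk.le
    have h6 : k * -(T / R) = -(k * (T / R)) := by ring
    linarith [h5, h6.symm ▸ h5]
  have hs₁₂ : s₁ < s₂ := by
    rw [hs₁def, hs₂def, hR]
    nlinarith
  -- continuity on [s₁, s₂]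
  have habs : ∀ u ∈ Set.Icc s₁ s₂, ∀ i, ε' ≤ |u + lam i| := by
    intro u hu i
    have h2 : u + lam 0 ≤ -ε' := by linarith [hs₂0, hu.2]
    have h3 := abs_bound_Iio hanti (lt_of_le_of_lt h2 (by linarith)) i
    linarith
  have hcont : ContinuousOn (fun u => 1 + k * ∑' i, a i / (u + lam i)) (Set.Icc s₁ s₂) := by
    apply ContinuousOn.add continuousOn_const
    apply ContinuousOn.mul continuousOn_const
    apply continuousOn_tsum (u := fun i => a i / ε')
    · intro i
      apply ContinuousOn.div continuousOn_const
        ((continuous_id.add continuous_const).continuousOn)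
      intro u hu h0
      have := habs u hu i
      simp only [Pi.add_apply, id_eq] at h0
      rw [h0, abs_zero] at this
      linarith
    · exact hasum.div_const ε'
    · intro i u hu
      rw [norm_div, Real.norm_eq_abs, Real.norm_eq_abs, abs_of_pos (hapos i)]
      gcongr
      · exact (hapos i).le
      · exact habs u hu i
  have h0mem : (0 : ℝ) ∈ Set.Ioo (1 + k * ∑' i, a i / (s₂ + lam i))
      (1 + k * ∑' i, a i / (s₁ + lam i)) := ⟨hfs₂, hfs₁⟩
  obtain ⟨c, hc, hfc⟩ := intermediate_value_Ioo' hs₁₂.le hcont h0mem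
  have hcmem : c ∈ Set.Iio A := lt_trans hc.2 hs₂mem
  refine ⟨c, ⟨hcmem, hfc⟩, ?_⟩
  rintro y ⟨hy, hyeq⟩
  exact huniq y hy c hcmem hyeq hfc

theorem stmt12 (lam : ℕ → ℝ) (hpos : ∀ i, 0 < lam i) (hanti : StrictAnti lam)
    (hlim : Tendsto lam atTop (nhds 0))
    (a : ℕ → ℝ) (hapos : ∀ i, 0 < a i) (hasum : Summable a)
    (k : ℝ) (hk : 0 < k) :
    (∃! s : ℝ, s ∈ Set.Iio (-(lam 0)) ∧ 1 + k * (∑' i, a i / (s + lam i)) = 0) ∧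
    ∀ j : ℕ, ∃! s : ℝ, s ∈ Set.Ioo (-(lam j)) (-(lam (j + 1))) ∧
      1 + k * (∑' i, a i / (s + lam i)) = 0 :=
  ⟨key_Iio lam hanti a hapos hasum k hk, fun j => key_Ioo lam hanti a hapos hasum k hk j⟩
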